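/- Let u > 0, κ ≥ 0, 0 < λ ≤ 2κ with u ≥ λ/(4κ), N1 ≥ 2 and let x^{opt} = ((4uκ − λ)/(2u²)) e₁ ∈ ℝ^{N1}. Then for all x ∈ ℝ^{N1}, (1/2)(u x₁ + u x₂ − 2κ)² + (λ/2)‖x‖₁ ≥ (1/2)(u x₁^{opt} + u x₂^{opt} − 2κ)² + (λ/2)‖x^{opt}‖₁, i.e., x^{opt} is a global minimizer of the LASSO objective with equal weights u₁ = u₂ = u. -/

import Mathlib

theorem stmt_19 (N1 : ℕ) (hN : 2 ≤ N1) (u κ lam : ℝ)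
    (hu : 0 < u) (hκ : 0 ≤ κ) (hlam0 : 0 < lam) (hlam : lam ≤ 2 * κ)
    (hcond : lam / (4 * κ) ≤ u) :
    let xopt : Fin N1 → ℝ := fun i => if (i : ℕ) = 0 then (4 * u * κ - lam) / (2 * u ^ 2) else 0
    ∀ x : Fin N1 → ℝ,
      (1 / 2) * (u * xopt ⟨0, by omega⟩ + u * xopt ⟨1, by omega⟩ - 2 * κ) ^ 2
          + (lam / 2) * (∑ i, |xopt i|) ≤
        (1 / 2) * (u * x ⟨0, by omega⟩ + u * x ⟨1, by omega⟩ - 2 * κ) ^ 2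
          + (lam / 2) * (∑ i, |x i|) := by
  intro xopt x
  have hκ0 : 0 < κ := by linarith
  have hle : lam ≤ 4 * u * κ := by
    have := (div_le_iff₀ (by linarith : (0:ℝ) < 4 * κ)).mp hcond
    nlinarith
  set a : ℝ := (4 * u * κ - lam) / (2 * u ^ 2) with ha
  have ha2 : 2 * u ^ 2 * a = 4 * u * κ - lam := by
    rw [ha]; field_simp
  have ha0 : 0 ≤ a := div_nonneg (by linarith) (by positivity)
  -- compute xopt values
  have h0 : xopt ⟨0, by omega⟩ = a := by simp [xopt, ha]
  have h1 : xopt ⟨1, by omega⟩ = 0 := by simp [xopt]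
  have hsumopt : ∑ i, |xopt i| = a := by
    rw [Fintype.sum_eq_single (⟨0, by omega⟩ : Fin N1)]
    · simp [xopt]; rw [← ha, abs_of_nonneg ha0]
    · intro i hi
      have : (i : ℕ) ≠ 0 := by
        intro h; apply hi; exact Fin.ext h
      simp [xopt, this]
  set x0 := x ⟨0, by omega⟩
  set x1 := x ⟨1, by omega⟩
  have hsumx : |x0| + |x1| ≤ ∑ i, |x i| := by
    have hsub : ({⟨0, by omega⟩, ⟨1, by omega⟩} : Finset (Fin N1)) ⊆ Finset.univ :=
      Finset.subset_univ _
    have hne : (⟨0, by omega⟩ : Fin N1) ≠ ⟨1, by omega⟩ := by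
      intro h; simpa using Fin.mk.inj_iff.mp h
    calc |x0| + |x1| = ∑ i ∈ ({⟨0, by omega⟩, ⟨1, by omega⟩} : Finset (Fin N1)), |x i| := by
          rw [Finset.sum_pair hne]
      _ ≤ ∑ i, |x i| := Finset.sum_le_sum_of_subset_of_nonneg hsub
          (fun i _ _ => abs_nonneg _)
  rw [h0, h1, hsumopt]
  set s := x0 + x1 with hs
  have habs : |s| ≤ |x0| + |x1| := abs_add_le _ _
  have heq : u * x0 + u * x1 - 2 * κ = u * s - 2 * κ := by rw [hs]; ring
  clear_value s x0 x1 a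
  have key : (1 / 2) * (u * a + u * 0 - 2 * κ) ^ 2 + (lam / 2) * a ≤
      (1 / 2) * (u * s - 2 * κ) ^ 2 + (lam / 2) * |s| := by
    rcases le_or_gt 0 s with hsp | hsn
    · have habs2 : |s| = s := abs_of_nonneg hsp
      have h : (s - a) * (2 * u ^ 2 * a) = (s - a) * (4 * u * κ - lam) := by rw [ha2]
      rw [habs2]
      nlinarith [sq_nonneg (u * s - u * a), h]
    · have habs2 : |s| = -s := abs_of_neg hsn
      have haa : a * (2 * u ^ 2 * a) = a * (4 * u * κ - lam) := by rw [ha2]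
      rw [habs2]
      nlinarith [mul_nonneg ha0 (by linarith : (0:ℝ) ≤ 4 * u * κ - lam),
        mul_nonneg (mul_pos hu hκ0).le (neg_nonneg.mpr hsn.le),
        mul_nonneg hlam0.le (neg_nonneg.mpr hsn.le), sq_nonneg (u * s), haa]
  rw [heq]
  have hfin : |s| ≤ ∑ i, |x i| := le_trans habs hsumx
  have : (lam / 2) * |s| ≤ (lam / 2) * (∑ i, |x i|) := by
    apply mul_le_mul_of_nonneg_left hfin (by linarith)
  linarith
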